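/- For all natural numbers p and q, D(p+1, q+1) = 2·D(p, q). (Consequently the Arf invariants of the quadratic forms q_{p+1,q+1} and q_{p,q} over the field of two elements coincide.) -/

import Mathlib

/-- The quadratic form `q_{p,q}` over the field of two elements on `Fin (p+q) → ZMod 2`:
`q_{p,q}(x) = ∑_{q ≤ i} x i + ∑_{i < j} x i * x j`. -/
def qpq (p q : ℕ) (x : Fin (p + q) → ZMod 2) : ZMod 2 :=
  (∑ i : Fin (p + q), if q ≤ (i : ℕ) then x i else 0) +
    ∑ i : Fin (p + q), ∑ j : Fin (p + q), if (i : ℕ) < (j : ℕ) then x i * x j else 0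

/-- `D(p,q)` is the number of vectors on which `q_{p,q}` vanishes minus the number of
vectors on which it takes the value `1`. -/
def D (p q : ℕ) : ℤ :=
  ((Finset.univ.filter fun x : Fin (p + q) → ZMod 2 => qpq p q x = 0).card : ℤ) -
    ((Finset.univ.filter fun x : Fin (p + q) → ZMod 2 => qpq p q x = 1).card : ℤ)

lemma sum_snoc_peel (n : ℕ) (w : Fin (n+1) → ZMod 2) (v : ZMod 2) (F : ℕ → ZMod 2 → ZMod 2) :
    ∑ i : Fin (n+1+1), F (i : ℕ) (Fin.snoc (α := fun _ => ZMod 2) w v i) = (∑ i : Fin (n+1), F (i : ℕ) (w i)) + F (n+1) v := by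
  rw [Fin.sum_univ_castSucc]
  simp

lemma sum_cons_peel (n : ℕ) (x : Fin n → ZMod 2) (u : ZMod 2) (F : ℕ → ZMod 2 → ZMod 2) :
    ∑ i : Fin (n+1), F (i : ℕ) (Fin.cons (α := fun _ => ZMod 2) u x i) = F 0 u + ∑ i : Fin n, F ((i : ℕ)+1) (x i) := by
  rw [Fin.sum_univ_succ]
  simp

lemma key (p q : ℕ) (u v : ZMod 2) (x : Fin (p + q) → ZMod 2)
    (h : p + q + 1 + 1 = p + 1 + (q + 1)) :
    qpq (p + 1) (q + 1) (Fin.snoc (Fin.cons u x) v ∘ Fin.cast h.symm)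
      = qpq p q x + (v + u * v + u * (∑ i, x i) + (∑ i, x i) * v) := by
  have hs : ∀ (f : Fin (p + 1 + (q + 1)) → ZMod 2),
      ∑ i, f i = ∑ i : Fin (p + q + 1 + 1), f (Fin.cast h i) := by
    intro f
    exact (Fintype.sum_equiv (finCongr h) _ _ (fun i => rfl)).symm
  rw [qpq, qpq, hs]
  conv_lhs => rw [hs]
  conv_lhs => enter [2, 2, i]; rw [hs]
  simp only [Function.comp_apply, Fin.cast_cast, Fin.cast_eq_self, Fin.coe_cast]
  -- linear part
  rw [sum_snoc_peel (p+q) (Fin.cons u x) v (fun k t => if q + 1 ≤ k then t else 0)]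
  rw [sum_cons_peel (p+q) x u (fun k t => if q + 1 ≤ k then t else 0)]
  -- quadratic part: outer snoc peel
  have B := sum_snoc_peel (p+q) (Fin.cons u x) v
    (fun k t => ∑ j : Fin (p+q+1+1), if k < (j : ℕ) then
      t * Fin.snoc (α := fun _ => ZMod 2) (Fin.cons u x) v j else 0)
  beta_reduce at B
  rw [B]
  -- the `last`-row of the outer snoc peel vanishes
  have hz : ∑ j : Fin (p+q+1+1), (if p + q + 1 < (j : ℕ) then
      v * Fin.snoc (α := fun _ => ZMod 2) (Fin.cons u x) v j else 0) = 0 := by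
    refine Finset.sum_eq_zero fun j _ => if_neg ?_
    omega
  rw [hz]
  -- inner snoc peel, pointwise in i
  have B2 : ∀ i : Fin (p+q+1),
      (∑ j : Fin (p+q+1+1), if (i : ℕ) < (j : ℕ) then
        Fin.cons (α := fun _ => ZMod 2) u x i * Fin.snoc (α := fun _ => ZMod 2) (Fin.cons u x) v j else 0)
      = (∑ j : Fin (p+q+1), if (i : ℕ) < (j : ℕ) then
          Fin.cons (α := fun _ => ZMod 2) u x i * Fin.cons (α := fun _ => ZMod 2) u x j else 0)
        + Fin.cons (α := fun _ => ZMod 2) u x i * v := by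
    intro i
    have := sum_snoc_peel (p+q) (Fin.cons u x) v
      (fun k t => if (i : ℕ) < k then Fin.cons (α := fun _ => ZMod 2) u x i * t else 0)
    beta_reduce at this
    rw [this, if_pos i.isLt]
  rw [Finset.sum_congr rfl fun i _ => B2 i, Finset.sum_add_distrib]
  -- peel the cons in each remaining sum over Fin (p+q+1)
  have C1 := sum_cons_peel (p+q) x u
    (fun k t => ∑ j : Fin (p+q+1), if k < (j : ℕ) then
      t * Fin.cons (α := fun _ => ZMod 2) u x j else 0)
  beta_reduce at C1
  rw [C1]
  have C2 := sum_cons_peel (p+q) x u (fun _ t => t * v)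
  beta_reduce at C2
  rw [C2]
  have C3 := sum_cons_peel (p+q) x u (fun k t => if 0 < k then u * t else 0)
  beta_reduce at C3
  rw [C3]
  have C4 : ∀ i : Fin (p+q),
      (∑ j : Fin (p+q+1), if (i : ℕ) + 1 < (j : ℕ) then
        x i * Fin.cons (α := fun _ => ZMod 2) u x j else 0)
      = ∑ j : Fin (p+q), if (i : ℕ) < (j : ℕ) then x i * x j else 0 := by
    intro i
    have := sum_cons_peel (p+q) x u (fun k t => if (i : ℕ) + 1 < k then x i * t else 0)
    beta_reduce at this
    rw [this, if_neg (by omega)]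
    rw [zero_add]
    refine Finset.sum_congr rfl fun j _ => ?_
    congr 1
    simp [Nat.succ_lt_succ_iff]
  rw [Finset.sum_congr rfl fun i _ => C4 i]
  simp only [Nat.succ_le_succ_iff, Nat.zero_le, Nat.le_add_left, if_true, lt_irrefl, if_neg,
    Nat.not_succ_le_zero, if_false, Nat.zero_lt_succ, Nat.le_add_right, Finset.sum_add_distrib]
  rw [Finset.mul_sum, Finset.sum_mul]
  rw [if_neg (by omega : ¬ (q + 1 ≤ 0))]
  ring

def chi (z : ZMod 2) : ℤ := 1 - 2 * z.val

lemma D_eq_sum (p q : ℕ) :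
    (((Finset.univ.filter fun x : Fin (p + q) → ZMod 2 => qpq p q x = 0).card : ℤ) -
      ((Finset.univ.filter fun x : Fin (p + q) → ZMod 2 => qpq p q x = 1).card : ℤ))
    = ∑ x : Fin (p + q) → ZMod 2, chi (qpq p q x) := by
  rw [Finset.card_filter, Finset.card_filter]
  push_cast
  rw [← Finset.sum_sub_distrib]
  refine Finset.sum_congr rfl fun x _ => ?_
  have : ∀ z : ZMod 2, ((if z = 0 then (1:ℤ) else 0) - (if z = 1 then (1:ℤ) else 0)) = chi z := by
    decide
  exact this _

lemma chi_sum (a s : ZMod 2) :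
    ∑ u : ZMod 2, ∑ v : ZMod 2, chi (a + (v + u * v + u * s + s * v)) = 2 * chi a := by
  revert a s; decide

set_option maxHeartbeats 1000000 in
theorem D_succ_succ' (p q : ℕ) :
    ∑ y : Fin (p + 1 + (q + 1)) → ZMod 2, chi (qpq (p+1) (q+1) y)
      = 2 * ∑ x : Fin (p + q) → ZMod 2, chi (qpq p q x) := by
  have h : p + q + 1 + 1 = p + 1 + (q + 1) := by omega
  have step1 : ∑ y : Fin (p + 1 + (q + 1)) → ZMod 2, chi (qpq (p+1) (q+1) y)
      = ∑ z : Fin (p + q + 1 + 1) → ZMod 2, chi (qpq (p+1) (q+1) (z ∘ Fin.cast h.symm)) := by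
    apply Fintype.sum_equiv (Equiv.arrowCongr (finCongr h.symm) (Equiv.refl _))
    intro y
    congr 1
  rw [step1]
  have step2 : ∑ z : Fin (p + q + 1 + 1) → ZMod 2, chi (qpq (p+1) (q+1) (z ∘ Fin.cast h.symm))
      = ∑ vw : ZMod 2 × (Fin (p + q + 1) → ZMod 2),
          chi (qpq (p+1) (q+1) (Fin.snoc vw.2 vw.1 ∘ Fin.cast h.symm)) := by
    refine (Equiv.sum_comp (Fin.snocEquiv fun _ => ZMod 2) _).symm.trans ?_
    refine Finset.sum_congr rfl fun vw _ => ?_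
    rfl
  rw [step2, Fintype.sum_prod_type]
  have step3 : ∀ v : ZMod 2,
      ∑ w : Fin (p + q + 1) → ZMod 2, chi (qpq (p+1) (q+1) (Fin.snoc w v ∘ Fin.cast h.symm))
      = ∑ ux : ZMod 2 × (Fin (p + q) → ZMod 2),
          chi (qpq (p+1) (q+1) (Fin.snoc (Fin.cons ux.1 ux.2) v ∘ Fin.cast h.symm)) := by
    intro v
    exact (Equiv.sum_comp (Fin.consEquiv fun _ => ZMod 2) _).symm
  simp only [step3, Fintype.sum_prod_type]
  have step4 : ∀ (v u : ZMod 2) (x : Fin (p + q) → ZMod 2),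
      chi (qpq (p+1) (q+1) (Fin.snoc (Fin.cons u x) v ∘ Fin.cast h.symm))
      = chi (qpq p q x + (v + u * v + u * (∑ i, x i) + (∑ i, x i) * v)) := by
    intro v u x
    rw [key p q u v x h]
  simp only [step4]
  rw [Finset.sum_comm]
  conv_lhs => enter [2, u]; rw [Finset.sum_comm]
  rw [Finset.sum_comm, Finset.mul_sum]
  refine Finset.sum_congr rfl fun x _ => ?_
  exact (chi_sum (qpq p q x) (∑ i, x i))

theorem D_succ_succ (p q : ℕ) : D (p + 1) (q + 1) = 2 * D p q := by
  unfold D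
  rw [D_eq_sum, D_eq_sum, D_succ_succ']
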